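/- Let G = (ℤ/2)³ and ω(g,h,k) = (−1)^{g₁ h₂ k₃} as above. Then ω is not a coboundary: there is no function β : G × G → U(1) with ω(g₁,g₂,g₃) = β(g₂,g₃) β(g₁g₂,g₃)⁻¹ β(g₁,g₂g₃) β(g₁,g₂)⁻¹ for all g₁,g₂,g₃ ∈ G. Hence ω represents a nontrivial class in H³((ℤ/2)³, U(1)). -/

import Mathlib

/-- The type-III cocycle `ω(g,h,k) = (-1)^{g₁ h₂ k₃}` on `(ℤ/2)³`, valued in `{±1} ⊆ ℂ`. -/
def omega3 (g h k : ZMod 2 × ZMod 2 × ZMod 2) : ℂ :=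
  (-1 : ℂ) ^ (g.1.val * h.2.1.val * k.2.2.val)

/-- The cocycle `ω(g,h,k) = (-1)^{g₁ h₂ k₃}` on `(ℤ/2)³` is not a coboundary of any
`U(1)`-valued 2-cochain: it represents a nontrivial class in `H³((ℤ/2)³, U(1))`. -/
theorem stmt_10 :
    ¬ ∃ β : (ZMod 2 × ZMod 2 × ZMod 2) → (ZMod 2 × ZMod 2 × ZMod 2) → ℂ,
      (∀ g h, ‖β g h‖ = 1) ∧
      ∀ g1 g2 g3,
        omega3 g1 g2 g3 =
          β g2 g3 * (β (g1 + g2) g3)⁻¹ * β g1 (g2 + g3) * (β g1 g2)⁻¹ := by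
  rintro ⟨β, hb, h⟩
  have nz : ∀ g h, β g h ≠ 0 := by
    intro g h h0
    have := hb g h
    rw [h0] at this
    simp at this
  set e1 : ZMod 2 × ZMod 2 × ZMod 2 := (1, 0, 0) with he1
  set e2 : ZMod 2 × ZMod 2 × ZMod 2 := (0, 1, 0) with he2
  set e3 : ZMod 2 × ZMod 2 × ZMod 2 := (0, 0, 1) with he3
  have prod1 : omega3 e1 e2 e3 * omega3 e2 e3 e1 * omega3 e3 e1 e2 =
      omega3 e2 e1 e3 * omega3 e1 e3 e2 * omega3 e3 e2 e1 := by
    rw [h e1 e2 e3, h e2 e3 e1, h e3 e1 e2, h e2 e1 e3, h e1 e3 e2, h e3 e2 e1,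
      add_comm e2 e1, add_comm e1 e3, add_comm e3 e2]
    field_simp [nz]
  have hval : omega3 e1 e2 e3 = -1 ∧ omega3 e2 e3 e1 = 1 ∧ omega3 e3 e1 e2 = 1 ∧
      omega3 e2 e1 e3 = 1 ∧ omega3 e1 e3 e2 = 1 ∧ omega3 e3 e2 e1 = 1 := by
    simp [omega3, he1, he2, he3, ZMod.val_one]
  obtain ⟨a1, a2, a3, a4, a5, a6⟩ := hval
  rw [a1, a2, a3, a4, a5, a6] at prod1
  norm_num at prod1
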